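/- Let L ∈ GL(m, ℝ) have all eigenvalues of modulus less than 1 and ε > 0. Define the boundary map b : ℝ^m × S^{m−1} → ℝ^m × S^{m−1} by b(x, n) := (L(x) + ε L_⊥(n), L_⊥(n)), and x(n) := ε Σ_{k=0}^∞ L^k(L_⊥^{-k}(n)). Then the graph {(x(n), n) : n ∈ S^{m−1}} is invariant under b, i.e., b(x(n), n) = (x(L_⊥(n)), L_⊥(n)) for all n ∈ S^{m−1}. -/

import Mathlib

noncomputable section

/-- All (complex) eigenvalues of the real matrix `M` have modulus less than 1. -/
def specLt1 {m : ℕ} (M : Matrix (Fin m) (Fin m) ℝ) : Prop :=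
  ∀ μ ∈ spectrum ℂ (M.map Complex.ofReal), ‖μ‖ < 1

/-- The induced map `L_⊥(n) = (Lᵀ)⁻¹ n / ‖(Lᵀ)⁻¹ n‖` on unit normal vectors. -/
def Lperp {m : ℕ} (M : Matrix (Fin m) (Fin m) ℝ) (n : EuclideanSpace ℝ (Fin m)) :
    EuclideanSpace ℝ (Fin m) :=
  ‖Matrix.toEuclideanLin M.transpose⁻¹ n‖⁻¹ • Matrix.toEuclideanLin M.transpose⁻¹ n

/-- The inverse `L_⊥⁻¹(n) = Lᵀ n / ‖Lᵀ n‖`. -/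
def LperpInv {m : ℕ} (M : Matrix (Fin m) (Fin m) ℝ) (n : EuclideanSpace ℝ (Fin m)) :
    EuclideanSpace ℝ (Fin m) :=
  ‖Matrix.toEuclideanLin M.transpose n‖⁻¹ • Matrix.toEuclideanLin M.transpose n

/-- `x(n) = ε ∑ₖ L^k (L_⊥^{-k}(n))`. -/
def xBd {m : ℕ} (M : Matrix (Fin m) (Fin m) ℝ) (ε : ℝ) (n : EuclideanSpace ℝ (Fin m)) :
    EuclideanSpace ℝ (Fin m) :=
  ε • ∑' k : ℕ, (fun v => Matrix.toEuclideanLin M v)^[k] ((LperpInv M)^[k] n)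

/-- The boundary map `b(x, n) = (L(x) + ε L_⊥(n), L_⊥(n))`. -/
def bMap {m : ℕ} (M : Matrix (Fin m) (Fin m) ℝ) (ε : ℝ)
    (p : EuclideanSpace ℝ (Fin m) × EuclideanSpace ℝ (Fin m)) :
    EuclideanSpace ℝ (Fin m) × EuclideanSpace ℝ (Fin m) :=
  (Matrix.toEuclideanLin M p.1 + ε • Lperp M p.2, Lperp M p.2)

namespace Stmt17Aux

def cVec {m : ℕ} (v : EuclideanSpace ℝ (Fin m)) : EuclideanSpace ℂ (Fin m) :=
  WithLp.toLp 2 (fun i => (v i : ℂ))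

lemma norm_cVec {m : ℕ} (v : EuclideanSpace ℝ (Fin m)) : ‖cVec v‖ = ‖v‖ := by
  simp [cVec, EuclideanSpace.norm_eq]

lemma toEL_map {m : ℕ} (N : Matrix (Fin m) (Fin m) ℝ) (v : EuclideanSpace ℝ (Fin m)) :
    Matrix.toEuclideanLin (N.map Complex.ofReal) (cVec v) = cVec (Matrix.toEuclideanLin N v) := by
  ext i
  simp [Matrix.toEuclideanLin_apply, cVec, Matrix.mulVec, dotProduct]

open scoped Matrix.Norms.L2Operator in
set_option maxHeartbeats 1000000 in
lemma exists_summable_bound {m : ℕ} (M : Matrix (Fin m) (Fin m) ℝ) (hspec : specLt1 M) :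
    ∃ c : ℕ → ℝ, Summable c ∧ ∀ (k : ℕ) (v : EuclideanSpace ℝ (Fin m)),
      ‖Matrix.toEuclideanLin (M ^ k) v‖ ≤ c k * ‖v‖ := by
  rcases Nat.eq_zero_or_pos m with hm | hm
  · subst hm
    refine ⟨fun _ => 0, summable_zero, fun k v => ?_⟩
    have h1 : (Matrix.toEuclideanLin (M ^ k) v) = 0 := Subsingleton.elim _ _
    rw [h1]; simp
  · set Mc := M.map (Complex.ofReal) with hMc
    have hrad : spectralRadius ℂ Mc < 1 := by
      haveI : NeZero m := ⟨hm.ne'⟩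
      exact_mod_cast spectrum.spectralRadius_lt_of_forall_lt (a := Mc) (r := 1)
        (fun z hz => by have h := hspec z hz; exact_mod_cast h)
    have hsum : Summable (fun k : ℕ => ‖Mc ^ k‖) := by
      obtain ⟨r, hr1, hr2⟩ := ENNReal.lt_iff_exists_nnreal_btwn.mp hrad
      have gel := spectrum.pow_nnnorm_pow_one_div_tendsto_nhds_spectralRadius Mc
      have hev : ∀ᶠ k : ℕ in Filter.atTop, (‖Mc ^ k‖₊ : ENNReal) ^ (1/(k:ℝ)) < r :=
        gel.eventually_lt_const hr1
      have hr2' : (r : ℝ) < 1 := by exact_mod_cast hr2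
      have hev2 : ∀ᶠ k : ℕ in Filter.atTop, ‖Mc ^ k‖ ≤ (r:ℝ) ^ k := by
        filter_upwards [hev, Filter.eventually_gt_atTop 0] with k hk hk0
        have h2 := ENNReal.rpow_le_rpow hk.le (by positivity : (0:ℝ) ≤ (k:ℝ))
        rw [← ENNReal.rpow_mul, one_div, inv_mul_cancel₀
            (by exact_mod_cast hk0.ne' : (k:ℝ) ≠ 0), ENNReal.rpow_one,
            ENNReal.rpow_natCast] at h2
        have h3 : ‖Mc ^ k‖₊ ≤ r ^ k := by exact_mod_cast h2
        exact_mod_cast h3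
      apply Summable.of_norm_bounded_eventually_nat
        (summable_geometric_of_lt_one r.coe_nonneg hr2')
      filter_upwards [hev2] with k hk
      simpa using hk
    refine ⟨fun k => ‖Mc ^ k‖, hsum, fun k v => ?_⟩
    have hpow : (M ^ k).map Complex.ofReal = Mc ^ k := by
      rw [hMc]
      induction k with
      | zero => simp [Matrix.map_one Complex.ofReal Complex.ofReal_zero Complex.ofReal_one]
      | succ k ih =>
        rw [pow_succ, pow_succ, ← ih]
        ext i j
        simp [Matrix.mul_apply, Matrix.map_apply]
    have h2 : ‖Matrix.toEuclideanLin (Mc ^ k) (cVec v)‖ ≤ ‖Mc ^ k‖ * ‖cVec v‖ :=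
      (Mc ^ k).l2_opNorm_mulVec (cVec v)
    rw [← hpow, toEL_map, norm_cVec, norm_cVec] at h2
    simp only [hMc]
    rw [← hpow]
    exact h2

lemma toEL_ne {m : ℕ} {A : Matrix (Fin m) (Fin m) ℝ} (hA : IsUnit A.det)
    {v : EuclideanSpace ℝ (Fin m)} (hv : v ≠ 0) : Matrix.toEuclideanLin A v ≠ 0 := by
  have hU : IsUnit A := (Matrix.isUnit_iff_isUnit_det A).mpr hA
  have hinj : Function.Injective A.mulVec := Matrix.mulVec_injective_iff_isUnit.mpr hU
  intro h
  apply hv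
  have h' : A.mulVec ((WithLp.equiv 2 (Fin m → ℝ)) v) = A.mulVec 0 := by
    rw [Matrix.mulVec_zero]
    exact congrArg (WithLp.equiv 2 (Fin m → ℝ)) h
  have := hinj h'
  exact (WithLp.equiv 2 (Fin m → ℝ)).injective (by simpa using this)

lemma toEL_mul_apply {m : ℕ} (A B : Matrix (Fin m) (Fin m) ℝ) (v : EuclideanSpace ℝ (Fin m)) :
    Matrix.toEuclideanLin (A * B) v = Matrix.toEuclideanLin A (Matrix.toEuclideanLin B v) := by
  ext i
  simp [Matrix.toEuclideanLin_apply, Matrix.mulVec_mulVec]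

lemma iter_toEL {m : ℕ} (M : Matrix (Fin m) (Fin m) ℝ) (k : ℕ) (v : EuclideanSpace ℝ (Fin m)) :
    (fun v => Matrix.toEuclideanLin M v)^[k] v = Matrix.toEuclideanLin (M ^ k) v := by
  induction k with
  | zero => simp [Matrix.toEuclideanLin_apply]
  | succ k ih =>
    rw [Function.iterate_succ_apply', ih, pow_succ', toEL_mul_apply]

lemma norm_LperpInv {m : ℕ} {M : Matrix (Fin m) (Fin m) ℝ} (hdet : IsUnit M.det)
    {v : EuclideanSpace ℝ (Fin m)} (hv : v ≠ 0) : ‖LperpInv M v‖ = 1 := by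
  have hdetT : IsUnit M.transpose.det := by rwa [Matrix.det_transpose]
  have h0 : Matrix.toEuclideanLin M.transpose v ≠ 0 := toEL_ne hdetT hv
  have h0' : ‖Matrix.toEuclideanLin M.transpose v‖ ≠ 0 := norm_ne_zero_iff.mpr h0
  rw [LperpInv, norm_smul, norm_inv, norm_norm, inv_mul_cancel₀ h0']

lemma norm_Lperp {m : ℕ} {M : Matrix (Fin m) (Fin m) ℝ} (hdet : IsUnit M.det)
    {v : EuclideanSpace ℝ (Fin m)} (hv : v ≠ 0) : ‖Lperp M v‖ = 1 := by
  have hdetT : IsUnit M.transpose.det := by rwa [Matrix.det_transpose]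
  have hdetTi : IsUnit M.transpose⁻¹.det := Matrix.isUnit_nonsing_inv_det _ hdetT
  have h0 : Matrix.toEuclideanLin M.transpose⁻¹ v ≠ 0 := toEL_ne hdetTi hv
  have h0' : ‖Matrix.toEuclideanLin M.transpose⁻¹ v‖ ≠ 0 := norm_ne_zero_iff.mpr h0
  rw [Lperp, norm_smul, norm_inv, norm_norm, inv_mul_cancel₀ h0']

lemma norm_iter_LperpInv {m : ℕ} {M : Matrix (Fin m) (Fin m) ℝ} (hdet : IsUnit M.det)
    {n : EuclideanSpace ℝ (Fin m)} (hn : ‖n‖ = 1) (k : ℕ) : ‖(LperpInv M)^[k] n‖ = 1 := by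
  induction k with
  | zero => simpa using hn
  | succ k ih =>
    rw [Function.iterate_succ_apply']
    exact norm_LperpInv hdet (by intro h; rw [h] at ih; simp at ih)

lemma LperpInv_Lperp {m : ℕ} {M : Matrix (Fin m) (Fin m) ℝ} (hdet : IsUnit M.det)
    {n : EuclideanSpace ℝ (Fin m)} (hn : ‖n‖ = 1) : LperpInv M (Lperp M n) = n := by
  have hn0 : n ≠ 0 := by intro h; rw [h] at hn; simp at hn
  have hdetT : IsUnit M.transpose.det := by rwa [Matrix.det_transpose]
  have hdetTi : IsUnit M.transpose⁻¹.det := Matrix.isUnit_nonsing_inv_det _ hdetT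
  set u := Matrix.toEuclideanLin M.transpose⁻¹ n with hu
  have hu0 : u ≠ 0 := toEL_ne hdetTi hn0
  have hu0' : ‖u‖ ≠ 0 := norm_ne_zero_iff.mpr hu0
  have hTu : Matrix.toEuclideanLin M.transpose u = n := by
    rw [hu, ← toEL_mul_apply, Matrix.mul_nonsing_inv _ hdetT]
    simp [Matrix.toEuclideanLin_apply]
  rw [LperpInv, Lperp, ← hu, map_smul, hTu, norm_smul, norm_inv, norm_norm, hn, mul_one,
    inv_inv, smul_smul, mul_inv_cancel₀ hu0', one_smul]

end Stmt17Aux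


set_option maxHeartbeats 1000000 in
/-- The graph `{(x(n), n) : n ∈ S^{m-1}}` is invariant under the boundary map `b`. -/
theorem stmt17 {m : ℕ} (M : Matrix (Fin m) (Fin m) ℝ) (hdet : IsUnit M.det)
    (hspec : specLt1 M) (ε : ℝ) (hε : 0 < ε) :
    ∀ n : EuclideanSpace ℝ (Fin m), ‖n‖ = 1 →
      bMap M ε (xBd M ε n, n) = (xBd M ε (Lperp M n), Lperp M n) := by
  intro n hn
  have hn0 : n ≠ 0 := fun h => by rw [h] at hn; simp at hn
  have hLn : ‖Lperp M n‖ = 1 := Stmt17Aux.norm_Lperp hdet hn0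
  obtain ⟨c, hc, hbound⟩ := Stmt17Aux.exists_summable_bound M hspec
  have hGbound : ∀ (w : EuclideanSpace ℝ (Fin m)), ‖w‖ = 1 →
      Summable (fun k => (fun v => Matrix.toEuclideanLin M v)^[k] ((LperpInv M)^[k] w)) := by
    intro w hw
    apply Summable.of_norm_bounded hc
    intro k
    rw [Stmt17Aux.iter_toEL]
    calc ‖Matrix.toEuclideanLin (M ^ k) ((LperpInv M)^[k] w)‖
        ≤ c k * ‖(LperpInv M)^[k] w‖ := hbound k _
      _ = c k := by rw [Stmt17Aux.norm_iter_LperpInv hdet hw, mul_one]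
  have hG := hGbound n hn
  have hF := hGbound _ hLn
  have key : ∀ k : ℕ,
      (fun v => Matrix.toEuclideanLin M v)^[k+1] ((LperpInv M)^[k+1] (Lperp M n))
        = Matrix.toEuclideanLin M
            ((fun v => Matrix.toEuclideanLin M v)^[k] ((LperpInv M)^[k] n)) := by
    intro k
    rw [Function.iterate_succ_apply (LperpInv M), Stmt17Aux.LperpInv_Lperp hdet hn,
      Function.iterate_succ_apply' (fun v => Matrix.toEuclideanLin M v)]
  have htsum : (∑' k : ℕ, (fun v => Matrix.toEuclideanLin M v)^[k]
        ((LperpInv M)^[k] (Lperp M n)))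
      = Lperp M n + Matrix.toEuclideanLin M
          (∑' k : ℕ, (fun v => Matrix.toEuclideanLin M v)^[k] ((LperpInv M)^[k] n)) := by
    have hF1 : Summable (fun k : ℕ => (fun v => Matrix.toEuclideanLin M v)^[k+1]
        ((LperpInv M)^[k+1] (Lperp M n))) := by
      apply Summable.of_norm_bounded ((summable_nat_add_iff 1).mpr hc)
      intro k
      rw [Stmt17Aux.iter_toEL]
      calc ‖Matrix.toEuclideanLin (M ^ (k+1)) ((LperpInv M)^[k+1] (Lperp M n))‖
          ≤ c (k+1) * ‖(LperpInv M)^[k+1] (Lperp M n)‖ := hbound (k+1) _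
        _ = c (k+1) := by rw [Stmt17Aux.norm_iter_LperpInv hdet hLn, mul_one]
    rw [tsum_eq_zero_add' (f := fun k : ℕ => (fun v => Matrix.toEuclideanLin M v)^[k]
      ((LperpInv M)^[k] (Lperp M n))) hF1]
    have hmap : Matrix.toEuclideanLin M
        (∑' k : ℕ, (fun v => Matrix.toEuclideanLin M v)^[k] ((LperpInv M)^[k] n))
        = ∑' k : ℕ, Matrix.toEuclideanLin M
            ((fun v => Matrix.toEuclideanLin M v)^[k] ((LperpInv M)^[k] n)) :=
      (Matrix.toEuclideanCLM (𝕜 := ℝ) M).map_tsum hG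
    exact congrArg₂ (· + ·) (by simp) ((tsum_congr key).trans hmap.symm)
  have hfst : Matrix.toEuclideanLin M (xBd M ε n) + ε • Lperp M n
      = xBd M ε (Lperp M n) := by
    simp only [xBd]
    rw [htsum, smul_add, map_smul]
    exact add_comm _ _
  simp only [bMap]
  rw [hfst]
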